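/- For s, t ∈ T with |st⁻¹| = 3 and indices i < j in {1,…,n}, the elements t.(i,j) and s.(i,j) of the wreath product T wr Sym(n) have product of order 3, and {t.(i,j), s.(i,j), (st⁻¹s).(i,j)} is a line of the Fischer space. -/

import Mathlib

/-- The action of `Sym(n)` on the base group `Tⁿ` by permuting coordinates. -/
def permMulAut (T : Type*) [Group T] (n : ℕ) :
    Equiv.Perm (Fin n) →* MulAut (Fin n → T) where
  toFun σ :=
    { toFun := fun f => f ∘ σ.symm
      invFun := fun f => f ∘ σ
      left_inv := fun f => by funext i; simp
      right_inv := fun f => by funext i; simp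
      map_mul' := fun f g => rfl }
  map_one' := by
    apply MulEquiv.ext; intro f; funext i; rfl
  map_mul' := fun σ τ => by
    apply MulEquiv.ext; intro f; funext i; rfl

/-- The wreath product `T wr Sym(n)`. -/
abbrev WreathProduct (T : Type*) [Group T] (n : ℕ) :=
  SemidirectProduct (Fin n → T) (Equiv.Perm (Fin n)) (permMulAut T n)

/-- The 3-transposition `t.(i,j) := t_i t_j⁻¹ (i,j)` of `T wr Sym(n)`. -/
def wrTransposition (T : Type*) [Group T] (n : ℕ) (t : T) (i j : Fin n) :
    WreathProduct T n :=
  SemidirectProduct.inl (Pi.mulSingle i t * Pi.mulSingle j t⁻¹) *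
    SemidirectProduct.inr (Equiv.swap i j)

/-- For `s, t ∈ T` (all elements of `T` of order 1, 2, or 3) with
`|st⁻¹| = 3` and indices `i < j`, the elements `c = t.(i,j)` and `d = s.(i,j)` of
`T wr Sym(n)` have product of order 3, and `{t.(i,j), s.(i,j), (st⁻¹s).(i,j)}` is the
Fischer line through them, i.e. `c^d = d⁻¹cd = (st⁻¹s).(i,j)`. -/
theorem statement12 (T : Type*) [Group T]
    (hT : ∀ t : T, orderOf t ∈ ({1, 2, 3} : Set ℕ))
    (n : ℕ) (s t : T) (hst : orderOf (s * t⁻¹) = 3)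
    (i j : Fin n) (hij : i < j)
    (c d : WreathProduct T n)
    (hc : c = wrTransposition T n t i j) (hd : d = wrTransposition T n s i j) :
    orderOf (c * d) = 3 ∧
      d⁻¹ * c * d = wrTransposition T n (s * t⁻¹ * s) i j ∧
      ({c, d, d⁻¹ * c * d} : Set (WreathProduct T n)) =
        {wrTransposition T n t i j, wrTransposition T n s i j,
          wrTransposition T n (s * t⁻¹ * s) i j} := by
  
  subst hc hd
  have hne : i ≠ j := ne_of_lt hij
  have h3 : (s * t⁻¹) ^ 3 = 1 := by rw [← hst]; exact pow_orderOf_eq_one _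
  have hord : orderOf (wrTransposition T n t i j * wrTransposition T n s i j) = 3 := by
    have hts : (t * s⁻¹) ^ 3 = 1 := by
      have h : t * s⁻¹ = (s * t⁻¹)⁻¹ := by simp
      rw [h, inv_pow, h3, inv_one]
    have hts' : (t⁻¹ * s) ^ 3 = 1 := by
      have h : (t⁻¹ * s) ^ 3 = t⁻¹ * (s * t⁻¹) ^ 3 * t := by
        simp [pow_succ, mul_assoc]
      rw [h, h3, mul_one, inv_mul_cancel]
    have hmul : wrTransposition T n t i j * wrTransposition T n s i j =
        SemidirectProduct.inl (Pi.mulSingle i (t * s⁻¹) * Pi.mulSingle j (t⁻¹ * s)) := by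
      ext k
      · simp only [wrTransposition, SemidirectProduct.mul_left, SemidirectProduct.mul_right,
          SemidirectProduct.left_inl, SemidirectProduct.right_inl, SemidirectProduct.left_inr,
          SemidirectProduct.right_inr]
        simp only [wrTransposition, SemidirectProduct.mul_left, SemidirectProduct.mul_right,
          SemidirectProduct.left_inl, SemidirectProduct.right_inl, SemidirectProduct.left_inr,
          SemidirectProduct.right_inr, permMulAut, MonoidHom.coe_mk, OneHom.coe_mk,
          MulEquiv.coe_mk, Equiv.coe_fn_mk, one_mul, mul_one, map_one]
        simp [Pi.mul_apply, Pi.mulSingle_apply, Equiv.swap_apply_def]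
        split_ifs <;> simp_all
      · simp [wrTransposition]
    rw [hmul, orderOf_injective _ SemidirectProduct.inl_injective]
    refine orderOf_eq_prime ?_ ?_
    · funext k
      simp [Pi.mulSingle_apply]
      split_ifs <;> simp_all
    · intro hgone
      have := congr_fun hgone i
      simp [Pi.mulSingle_apply, hne] at this
      rw [show s * t⁻¹ = (t * s⁻¹)⁻¹ by group, this] at hst
      simp at hst
  have hconj : (wrTransposition T n s i j)⁻¹ * wrTransposition T n t i j *
      wrTransposition T n s i j = wrTransposition T n (s * t⁻¹ * s) i j := by
    ext k
    · simp only [wrTransposition, SemidirectProduct.mul_left, SemidirectProduct.mul_right,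
        SemidirectProduct.inv_left, SemidirectProduct.inv_right,
        SemidirectProduct.left_inl, SemidirectProduct.right_inl, SemidirectProduct.left_inr,
        SemidirectProduct.right_inr]
      simp only [wrTransposition, SemidirectProduct.mul_left, SemidirectProduct.mul_right,
        SemidirectProduct.inv_left, SemidirectProduct.inv_right,
        SemidirectProduct.left_inl, SemidirectProduct.right_inl, SemidirectProduct.left_inr,
        SemidirectProduct.right_inr, permMulAut, MonoidHom.coe_mk, OneHom.coe_mk,
        MulEquiv.coe_mk, Equiv.coe_fn_mk, one_mul, mul_one, map_one]
      simp [Pi.mul_apply, Pi.mulSingle_apply, Equiv.swap_apply_def, Function.comp]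
      simp only [Equiv.Perm.one_symm, Equiv.Perm.one_apply] at *
      split_ifs <;> simp_all <;> group
    · simp [wrTransposition]
  exact ⟨hord, hconj, by rw [hconj]⟩
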